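/- The 4-periodized heat kernel Θ(t, x) := Σ_{k ∈ ℤ} (4πt)^{−1/2} · exp(−(x − 4k)²/(4t)) satisfies the one-dimensional heat equation: for every t > 0 and x ∈ ℝ, the partial derivative of Θ with respect to t at (t, x) equals the second partial derivative of Θ with respect to x at (t, x). -/

import Mathlib

open Real

/-- The 4-periodized heat kernel, arising from the method of images for the heat
equation on an interval of length 2 with homogeneous Neumann boundary conditions:
`Θ(t, x) = Σ_{k ∈ ℤ} (4πt)^{−1/2} · exp(−(x − 4k)²/(4t))`. -/
noncomputable def periodizedHeatKernel (t x : ℝ) : ℝ :=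
  ∑' k : ℤ, (4 * π * t) ^ (-(1:ℝ)/2) * Real.exp (-(x - 4 * k) ^ 2 / (4 * t))


/-! ### Auxiliary summability and bound lemmas -/

lemma summable_exp_int {c : ℝ} (hc : 0 < c) :
    Summable fun k : ℤ => Real.exp (-c * (k:ℝ)^2) := by
  have h := summable_pow_mul_jacobiTheta₂_term_bound 0 (T := c/π) (by positivity) 0
  refine h.congr fun k => ?_
  rw [pow_zero, one_mul]
  congr 1
  field_simp
  ring

lemma sq_mul_exp_neg_le {c : ℝ} (hc : 0 < c) (a : ℝ) :
    a^2 * Real.exp (-a^2/c) ≤ c := by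
  have h1 : a^2/c ≤ Real.exp (a^2/c) :=
    le_trans (by linarith [div_nonneg (sq_nonneg a) hc.le]) (Real.add_one_le_exp _)
  have h2 : a^2 ≤ c * Real.exp (a^2/c) := by
    have := mul_le_mul_of_nonneg_left h1 hc.le
    rwa [mul_div_cancel₀ _ hc.ne'] at this
  calc a^2 * Real.exp (-a^2/c) ≤ (c * Real.exp (a^2/c)) * Real.exp (-a^2/c) :=
        mul_le_mul_of_nonneg_right h2 (Real.exp_pos _).le
    _ = c := by rw [mul_assoc, ← Real.exp_add]; ring_nf; simp

lemma exp_neg_sq_le_one {c : ℝ} (hc : 0 < c) (a : ℝ) : Real.exp (-a^2/c) ≤ 1 := by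
  rw [Real.exp_le_one_iff]
  have h1 := sq_nonneg a
  exact div_nonpos_of_nonpos_of_nonneg (by linarith) hc.le

lemma abs_mul_exp_neg_le {c : ℝ} (hc : 0 < c) (a : ℝ) :
    |a| * Real.exp (-a^2/c) ≤ c + 1 := by
  have h0 : |a| ≤ 1 + a^2 := by nlinarith [sq_nonneg (|a| - 1), sq_abs a, abs_nonneg a]
  calc |a| * Real.exp (-a^2/c) ≤ (1 + a^2) * Real.exp (-a^2/c) :=
        mul_le_mul_of_nonneg_right h0 (Real.exp_pos _).le
    _ = Real.exp (-a^2/c) + a^2 * Real.exp (-a^2/c) := by ring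
    _ ≤ 1 + c := add_le_add (exp_neg_sq_le_one hc a) (sq_mul_exp_neg_le hc a)
    _ = c + 1 := by ring

lemma key_exp {c z y₀ : ℝ} (hc : 0 < c) (hz : (z - y₀)^2 ≤ 1) (k : ℤ) :
    Real.exp (-(z - 4*(k:ℝ))^2/c) ≤ Real.exp ((y₀^2/2 + 1)/c) * Real.exp (-(4/c) * (k:ℝ)^2) := by
  rw [← Real.exp_add, Real.exp_le_exp]
  have key : -(z - 4*(k:ℝ))^2 ≤ (y₀^2/2 + 1) + -(4 * (k:ℝ)^2) := by
    nlinarith [sq_nonneg ((4*(k:ℝ) - y₀) - 2*(z - y₀)), sq_nonneg (4*(k:ℝ) - 2*y₀)]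
  calc -(z - 4*(k:ℝ))^2/c ≤ ((y₀^2/2 + 1) + -(4 * (k:ℝ)^2))/c := by gcongr
    _ = (y₀^2/2 + 1)/c + -(4/c) * (k:ℝ)^2 := by ring

/-! ### The summands and their derivatives -/

noncomputable def hk (t y : ℝ) (k : ℤ) : ℝ :=
  (4 * π * t) ^ (-(1:ℝ)/2) * Real.exp (-(y - 4 * k) ^ 2 / (4 * t))

noncomputable def hk1 (t y : ℝ) (k : ℤ) : ℝ := hk t y k * (-(y - 4 * k) / (2 * t))

noncomputable def hk2 (t y : ℝ) (k : ℤ) : ℝ :=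
  hk t y k * ((y - 4 * k) ^ 2 / (4 * t ^ 2) - 1 / (2 * t))

lemma hasDerivAt_hk_x {t : ℝ} (ht : 0 < t) (k : ℤ) (y : ℝ) :
    HasDerivAt (fun z => hk t z k) (hk1 t y k) y := by
  have hE : HasDerivAt (fun z : ℝ => -(z - 4 * (k:ℝ)) ^ 2 / (4 * t))
      (-(y - 4 * (k:ℝ)) / (2 * t)) y := by
    have h1 : HasDerivAt (fun z : ℝ => z - 4 * (k:ℝ)) 1 y := (hasDerivAt_id y).sub_const _
    have h2 := (h1.pow 2).neg.div_const (4 * t)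
    refine h2.congr_deriv ?_
    field_simp
    ring
  have h3 := (hE.exp).const_mul ((4 * π * t) ^ (-(1:ℝ)/2))
  refine h3.congr_deriv ?_
  unfold hk1 hk
  ring

lemma hasDerivAt_hk1_x {t : ℝ} (ht : 0 < t) (k : ℤ) (y : ℝ) :
    HasDerivAt (fun z => hk1 t z k) (hk2 t y k) y := by
  have hL : HasDerivAt (fun z : ℝ => -(z - 4 * (k:ℝ)) / (2 * t)) (-(1:ℝ) / (2 * t)) y :=
    (((hasDerivAt_id y).sub_const _).neg).div_const (2 * t)
  have h := (hasDerivAt_hk_x ht k y).mul hL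
  refine h.congr_deriv ?_
  unfold hk2 hk1 hk
  field_simp
  ring

lemma hasDerivAt_hk_t {t : ℝ} (ht : 0 < t) (k : ℤ) (x : ℝ) :
    HasDerivAt (fun τ => hk τ x k) (hk2 t x k) t := by
  have hc : HasDerivAt (fun τ : ℝ => (4 * π * τ) ^ (-(1:ℝ)/2))
      ((-(1:ℝ)/2) * (4 * π * t) ^ (-(1:ℝ)/2 - 1) * (4 * π)) t := by
    have h1 : HasDerivAt (fun τ : ℝ => 4 * π * τ) (4 * π) t := by
      simpa using (hasDerivAt_id t).const_mul (4 * π)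
    have h2 := (Real.hasDerivAt_rpow_const (x := 4 * π * t) (p := -(1:ℝ)/2)
      (Or.inl (by positivity))).comp t h1
    exact h2
  have hE : HasDerivAt (fun τ : ℝ => -(x - 4 * (k:ℝ)) ^ 2 / (4 * τ))
      ((x - 4 * (k:ℝ)) ^ 2 / (4 * t ^ 2)) t := by
    have h1 : HasDerivAt (fun τ : ℝ => 4 * τ) 4 t := by
      simpa using (hasDerivAt_id t).const_mul (4:ℝ)
    have h2 := (h1.inv (by positivity)).const_mul (-(x - 4 * (k:ℝ)) ^ 2)
    have heq : (fun τ : ℝ => -(x - 4 * (k:ℝ)) ^ 2 / (4 * τ))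
        = fun τ : ℝ => -(x - 4 * (k:ℝ)) ^ 2 * (4 * τ)⁻¹ := by
      funext τ; rw [div_eq_mul_inv]
    rw [heq]
    refine h2.congr_deriv ?_
    field_simp
  have h := hc.mul hE.exp
  refine h.congr_deriv ?_
  unfold hk2 hk
  have h4 : (4 * π * t) ^ (-(1:ℝ)/2 - 1) = (4 * π * t) ^ (-(1:ℝ)/2) / (4 * π * t) := by
    rw [Real.rpow_sub (by positivity), Real.rpow_one]
  rw [h4]
  field_simp
  ring

/-! ### Norm bounds -/

lemma norm_hk_le {t z y₀ : ℝ} (ht : 0 < t) (hz : (z - y₀)^2 ≤ 1) (k : ℤ) :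
    ‖hk t z k‖ ≤ ((4 * π * t) ^ (-(1:ℝ)/2) * Real.exp ((y₀^2/2 + 1)/(8*t)))
      * Real.exp (-(1/(2*t)) * (k:ℝ)^2) := by
  have hA : (0:ℝ) ≤ (4 * π * t) ^ (-(1:ℝ)/2) := Real.rpow_nonneg (by positivity) _
  have hkey := key_exp (c := 8*t) (by positivity) hz k
  have h48 : -(4/(8*t)) * (k:ℝ)^2 = -(1/(2*t)) * (k:ℝ)^2 := by ring
  rw [h48] at hkey
  have hEE : Real.exp (-(z - 4*(k:ℝ))^2/(4*t)) ≤ Real.exp (-(z - 4*(k:ℝ))^2/(8*t)) := by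
    rw [Real.exp_le_exp]
    have h := sq_nonneg (z - 4*(k:ℝ))
    rw [div_le_div_iff₀ (by positivity) (by positivity)]
    nlinarith
  calc ‖hk t z k‖ = (4 * π * t) ^ (-(1:ℝ)/2) * Real.exp (-(z - 4*(k:ℝ))^2/(4*t)) := by
        rw [hk, Real.norm_eq_abs, abs_mul, abs_of_nonneg hA, abs_of_nonneg (Real.exp_pos _).le]
    _ ≤ (4 * π * t) ^ (-(1:ℝ)/2) *
        (Real.exp ((y₀^2/2 + 1)/(8*t)) * Real.exp (-(1/(2*t)) * (k:ℝ)^2)) := by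
        exact mul_le_mul_of_nonneg_left (le_trans hEE hkey) hA
    _ = _ := by ring

lemma norm_hk1_le {t z y₀ : ℝ} (ht : 0 < t) (hz : (z - y₀)^2 ≤ 1) (k : ℤ) :
    ‖hk1 t z k‖ ≤ ((4 * π * t) ^ (-(1:ℝ)/2) * (8*t + 1) * Real.exp ((y₀^2/2 + 1)/(8*t)) / (2*t))
      * Real.exp (-(1/(2*t)) * (k:ℝ)^2) := by
  have hA : (0:ℝ) ≤ (4 * π * t) ^ (-(1:ℝ)/2) := Real.rpow_nonneg (by positivity) _
  set w := z - 4*(k:ℝ) with hw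
  have hkey := key_exp (c := 8*t) (by positivity) hz k
  have h48 : -(4/(8*t)) * (k:ℝ)^2 = -(1/(2*t)) * (k:ℝ)^2 := by ring
  rw [h48] at hkey
  have habs := abs_mul_exp_neg_le (c := 8*t) (by positivity) w
  have hsplit : Real.exp (-w^2/(4*t)) = Real.exp (-w^2/(8*t)) * Real.exp (-w^2/(8*t)) := by
    rw [← Real.exp_add]; congr 1; ring
  calc ‖hk1 t z k‖
      = (4 * π * t) ^ (-(1:ℝ)/2) * ((|w| * Real.exp (-w^2/(8*t))) * Real.exp (-w^2/(8*t))) / (2*t) := by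
        rw [hk1, hk, Real.norm_eq_abs, abs_mul, abs_mul, abs_of_nonneg hA,
          abs_of_nonneg (Real.exp_pos _).le, abs_div, abs_neg, abs_of_nonneg (by positivity : (0:ℝ) ≤ 2*t),
          ← hw, hsplit]
        ring
    _ ≤ (4 * π * t) ^ (-(1:ℝ)/2) * ((8*t + 1) *
          (Real.exp ((y₀^2/2 + 1)/(8*t)) * Real.exp (-(1/(2*t)) * (k:ℝ)^2))) / (2*t) := by
        gcongr
    _ = _ := by ring

lemma norm_hk2_le {t z y₀ : ℝ} (ht : 0 < t) (hz : (z - y₀)^2 ≤ 1) (k : ℤ) :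
    ‖hk2 t z k‖ ≤ ((4 * π * t) ^ (-(1:ℝ)/2) * (8*t/(4*t^2) + 1/(2*t))
        * Real.exp ((y₀^2/2 + 1)/(8*t))) * Real.exp (-(1/(2*t)) * (k:ℝ)^2) := by
  have hA : (0:ℝ) ≤ (4 * π * t) ^ (-(1:ℝ)/2) := Real.rpow_nonneg (by positivity) _
  set w := z - 4*(k:ℝ) with hw
  have hkey := key_exp (c := 8*t) (by positivity) hz k
  have h48 : -(4/(8*t)) * (k:ℝ)^2 = -(1/(2*t)) * (k:ℝ)^2 := by ring
  rw [h48] at hkey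
  have hsq := sq_mul_exp_neg_le (c := 8*t) (by positivity) w
  have hone := exp_neg_sq_le_one (c := 8*t) (by positivity) w
  have hsplit : Real.exp (-w^2/(4*t)) = Real.exp (-w^2/(8*t)) * Real.exp (-w^2/(8*t)) := by
    rw [← Real.exp_add]; congr 1; ring
  have htri : |w^2/(4*t^2) - 1/(2*t)| ≤ w^2/(4*t^2) + 1/(2*t) := by
    refine (abs_sub _ _).trans ?_
    rw [abs_of_nonneg (by positivity), abs_of_nonneg (by positivity)]
  calc ‖hk2 t z k‖
      = (4 * π * t) ^ (-(1:ℝ)/2) * Real.exp (-w^2/(4*t)) * |w^2/(4*t^2) - 1/(2*t)| := by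
        rw [hk2, hk, Real.norm_eq_abs, abs_mul, abs_mul, abs_of_nonneg hA,
          abs_of_nonneg (Real.exp_pos _).le, ← hw]
    _ ≤ (4 * π * t) ^ (-(1:ℝ)/2) * Real.exp (-w^2/(4*t)) * (w^2/(4*t^2) + 1/(2*t)) := by
        gcongr
    _ = (4 * π * t) ^ (-(1:ℝ)/2) * ((w^2 * Real.exp (-w^2/(8*t)))/(4*t^2)
          + Real.exp (-w^2/(8*t))/(2*t)) * Real.exp (-w^2/(8*t)) := by
        rw [hsplit]; ring
    _ ≤ (4 * π * t) ^ (-(1:ℝ)/2) * ((8*t)/(4*t^2) + 1/(2*t)) *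
          (Real.exp ((y₀^2/2 + 1)/(8*t)) * Real.exp (-(1/(2*t)) * (k:ℝ)^2)) := by
        gcongr
    _ = _ := by ring

lemma norm_hk2_le_t {t x : ℝ} (ht : 0 < t) {τ : ℝ} (hτ : τ ∈ Set.Ioo (t/2) (2*t)) (k : ℤ) :
    ‖hk2 τ x k‖ ≤ ((2 * π * t) ^ (-(1:ℝ)/2) * (16*t/t^2 + 1/t)
        * Real.exp ((x^2/2 + 1)/(16*t))) * Real.exp (-(1/(4*t)) * (k:ℝ)^2) := by
  obtain ⟨hτ1, hτ2⟩ := hτ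
  have hτ0 : 0 < τ := lt_trans (by linarith) hτ1
  have hA : (0:ℝ) ≤ (4 * π * τ) ^ (-(1:ℝ)/2) := Real.rpow_nonneg (by positivity) _
  have hB : (0:ℝ) ≤ (2 * π * t) ^ (-(1:ℝ)/2) := Real.rpow_nonneg (by positivity) _
  set w := x - 4*(k:ℝ) with hw
  -- coefficient bound
  have hAB : (4 * π * τ) ^ (-(1:ℝ)/2) ≤ (2 * π * t) ^ (-(1:ℝ)/2) := by
    rw [show -(1:ℝ)/2 = -(1/2) by ring, Real.rpow_neg (by positivity), Real.rpow_neg (by positivity)]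
    have h1 : (2 * π * t) ^ ((1:ℝ)/2) ≤ (4 * π * τ) ^ ((1:ℝ)/2) :=
      Real.rpow_le_rpow (by positivity) (by nlinarith [pi_pos]) (by norm_num)
    have h2 : (0:ℝ) < (2 * π * t) ^ ((1:ℝ)/2) := Real.rpow_pos_of_pos (by positivity) _
    exact inv_anti₀ h2 h1
  -- exponential bound
  have hE : Real.exp (-w^2/(4*τ)) ≤ Real.exp (-w^2/(8*t)) := by
    rw [Real.exp_le_exp]
    have h := sq_nonneg w
    rw [div_le_div_iff₀ (by positivity) (by positivity)]
    nlinarith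
  have hkey := key_exp (c := 16*t) (by positivity) (z := x) (y₀ := x) (by norm_num) k
  have h416 : -(4/(16*t)) * (k:ℝ)^2 = -(1/(4*t)) * (k:ℝ)^2 := by ring
  rw [h416] at hkey
  rw [← hw] at hkey
  have hsq := sq_mul_exp_neg_le (c := 16*t) (by positivity) w
  have hone := exp_neg_sq_le_one (c := 16*t) (by positivity) w
  have hsplit : Real.exp (-w^2/(8*t)) = Real.exp (-w^2/(16*t)) * Real.exp (-w^2/(16*t)) := by
    rw [← Real.exp_add]; congr 1; ring
  have htri : |w^2/(4*τ^2) - 1/(2*τ)| ≤ w^2/t^2 + 1/t := by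
    refine (abs_sub _ _).trans ?_
    rw [abs_of_nonneg (by positivity), abs_of_nonneg (by positivity)]
    have h1 : w^2/(4*τ^2) ≤ w^2/t^2 := by
      apply div_le_div_of_nonneg_left (sq_nonneg w) (by positivity)
      nlinarith
    have h2 : 1/(2*τ) ≤ 1/t := by
      rw [div_le_div_iff₀ (by positivity) ht]
      linarith
    linarith
  calc ‖hk2 τ x k‖
      = (4 * π * τ) ^ (-(1:ℝ)/2) * Real.exp (-w^2/(4*τ)) * |w^2/(4*τ^2) - 1/(2*τ)| := by
        rw [hk2, hk, Real.norm_eq_abs, abs_mul, abs_mul, abs_of_nonneg hA,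
          abs_of_nonneg (Real.exp_pos _).le, ← hw]
    _ ≤ (2 * π * t) ^ (-(1:ℝ)/2) * Real.exp (-w^2/(8*t)) * (w^2/t^2 + 1/t) := by
        gcongr
    _ = (2 * π * t) ^ (-(1:ℝ)/2) * ((w^2 * Real.exp (-w^2/(16*t)))/t^2
          + Real.exp (-w^2/(16*t))/t) * Real.exp (-w^2/(16*t)) := by
        rw [hsplit]; ring
    _ ≤ (2 * π * t) ^ (-(1:ℝ)/2) * (16*t/t^2 + 1/t) *
          (Real.exp ((x^2/2 + 1)/(16*t)) * Real.exp (-(1/(4*t)) * (k:ℝ)^2)) := by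
        gcongr
    _ = _ := by ring

/-! ### Summability -/

lemma summable_hk {t : ℝ} (ht : 0 < t) (y : ℝ) : Summable fun k : ℤ => hk t y k := by
  refine Summable.of_norm_bounded
    (((summable_exp_int (c := 1/(2*t)) (by positivity)).mul_left
      ((4 * π * t) ^ (-(1:ℝ)/2) * Real.exp ((y^2/2 + 1)/(8*t))))) (fun k => ?_)
  exact norm_hk_le ht (by norm_num) k

lemma summable_hk1 {t : ℝ} (ht : 0 < t) (y : ℝ) : Summable fun k : ℤ => hk1 t y k := by
  refine Summable.of_norm_bounded
    (((summable_exp_int (c := 1/(2*t)) (by positivity)).mul_left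
      ((4 * π * t) ^ (-(1:ℝ)/2) * (8*t + 1) * Real.exp ((y^2/2 + 1)/(8*t)) / (2*t)))) (fun k => ?_)
  exact norm_hk1_le ht (by norm_num) k

lemma periodizedHeatKernel_eq (t x : ℝ) : periodizedHeatKernel t x = ∑' k : ℤ, hk t x k := rfl

/-- **The periodized heat kernel solves the heat equation:** for every `t > 0` and every
`x ∈ ℝ`, the partial derivative of `Θ` with respect to `t` at `(t, x)` equals the second
partial derivative of `Θ` with respect to `x` at `(t, x)`, i.e. `∂ₜΘ = ∂ₓₓΘ`. -/
theorem periodizedHeatKernel_heat_equation {t : ℝ} (ht : 0 < t) (x : ℝ) :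
    deriv (fun τ => periodizedHeatKernel τ x) t
      = deriv (deriv (fun y => periodizedHeatKernel t y)) x := by
  -- first x-derivative, at every point
  have hΘx : ∀ y : ℝ, HasDerivAt (fun z => periodizedHeatKernel t z) (∑' k : ℤ, hk1 t y k) y := by
    intro y
    have h := hasDerivAt_tsum_of_isPreconnected
      (u := fun k : ℤ => ((4 * π * t) ^ (-(1:ℝ)/2) * (8*t + 1)
        * Real.exp ((y^2/2 + 1)/(8*t)) / (2*t)) * Real.exp (-(1/(2*t)) * (k:ℝ)^2))
      (((summable_exp_int (c := 1/(2*t)) (by positivity)).mul_left _))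
      isOpen_Ioo (isPreconnected_Ioo (a := y - 1) (b := y + 1))
      (g := fun k z => hk t z k) (g' := fun k z => hk1 t z k)
      (fun k z _ => hasDerivAt_hk_x ht k z)
      (fun k z hz => norm_hk1_le ht (by
        obtain ⟨h1, h2⟩ := hz; nlinarith) k)
      (y₀ := y) (show y ∈ Set.Ioo (y-1) (y+1) by rw [Set.mem_Ioo]; constructor <;> linarith)
      (summable_hk ht y)
      (show y ∈ Set.Ioo (y-1) (y+1) by rw [Set.mem_Ioo]; constructor <;> linarith)
    have he : (fun z => ∑' k : ℤ, hk t z k) = fun z => periodizedHeatKernel t z := by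
      funext z; rw [periodizedHeatKernel_eq]
    rwa [he] at h
  -- second x-derivative at x
  have h2nd : HasDerivAt (fun z => ∑' k : ℤ, hk1 t z k) (∑' k : ℤ, hk2 t x k) x := by
    refine hasDerivAt_tsum_of_isPreconnected
      (u := fun k : ℤ => ((4 * π * t) ^ (-(1:ℝ)/2) * (8*t/(4*t^2) + 1/(2*t))
        * Real.exp ((x^2/2 + 1)/(8*t))) * Real.exp (-(1/(2*t)) * (k:ℝ)^2))
      (((summable_exp_int (c := 1/(2*t)) (by positivity)).mul_left _))
      isOpen_Ioo (isPreconnected_Ioo (a := x - 1) (b := x + 1))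
      (g := fun k z => hk1 t z k) (g' := fun k z => hk2 t z k)
      (fun k z _ => hasDerivAt_hk1_x ht k z)
      (fun k z hz => norm_hk2_le ht (by obtain ⟨h1, h2⟩ := hz; nlinarith) k)
      (y₀ := x) (show x ∈ Set.Ioo (x-1) (x+1) by rw [Set.mem_Ioo]; constructor <;> linarith)
      (summable_hk1 ht x)
      (show x ∈ Set.Ioo (x-1) (x+1) by rw [Set.mem_Ioo]; constructor <;> linarith)
  -- t-derivative at t
  have hΘt : HasDerivAt (fun τ => periodizedHeatKernel τ x) (∑' k : ℤ, hk2 t x k) t := by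
    have h := hasDerivAt_tsum_of_isPreconnected
      (u := fun k : ℤ => ((2 * π * t) ^ (-(1:ℝ)/2) * (16*t/t^2 + 1/t)
        * Real.exp ((x^2/2 + 1)/(16*t))) * Real.exp (-(1/(4*t)) * (k:ℝ)^2))
      (((summable_exp_int (c := 1/(4*t)) (by positivity)).mul_left _))
      isOpen_Ioo (isPreconnected_Ioo (a := t/2) (b := 2*t))
      (g := fun (k : ℤ) τ => hk τ x k) (g' := fun (k : ℤ) τ => hk2 τ x k)
      (fun k τ hτ => hasDerivAt_hk_t (lt_trans (by linarith) hτ.1) k x)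
      (fun k τ hτ => norm_hk2_le_t ht hτ k)
      (y₀ := t) (show t ∈ Set.Ioo (t/2) (2*t) by rw [Set.mem_Ioo]; constructor <;> linarith)
      (summable_hk ht x)
      (show t ∈ Set.Ioo (t/2) (2*t) by rw [Set.mem_Ioo]; constructor <;> linarith)
    have he : (fun τ => ∑' k : ℤ, hk τ x k) = fun τ => periodizedHeatKernel τ x := by
      funext τ; rw [periodizedHeatKernel_eq]
    rwa [he] at h
  have e1 : deriv (fun y => periodizedHeatKernel t y) = fun y => ∑' k : ℤ, hk1 t y k :=
    funext fun y => (hΘx y).deriv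
  rw [hΘt.deriv, e1, h2nd.deriv]
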